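/- Let X = ∏_{i=1}^v X_i be the Cartesian product of digital images (X_i,κ_i), equipped with the normal product adjacency κ = NP_v(κ_1,…,κ_v), and suppose each X_i is connected. Let A ⊆ X be nonempty and let A_i = p_i(A) be the projection of A to the i-th factor. If (X,κ) is (A,m,n)-limited, then for each index i, (X_i,κ_i) is (A_i,m,n)-limited. -/

import Mathlib

/-- A function between digital images (graphs) is digitally continuous if adjacent
points map to equal or adjacent points. -/
def DigContinuous {V W : Type*} (G : SimpleGraph V) (H : SimpleGraph W) (f : V → W) : Prop :=
  ∀ x y : V, G.Adj x y → f x = f y ∨ H.Adj (f x) (f y)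

/-- `f` restricted to `A` is an `m`-map: it moves each point of `A` a graph distance of at
most `m`. -/
def IsMMapOn {V : Type*} (G : SimpleGraph V) (f : V → V) (A : Set V) (m : ℕ) : Prop :=
  ∀ a ∈ A, G.dist a (f a) ≤ m

/-- `A` is an `(m,n)`-limiting set for `(X,κ)`: every continuous self-map whose restriction
to `A` is an `m`-map is an `n`-map. -/
def IsLimiting {V : Type*} (G : SimpleGraph V) (A : Set V) (m n : ℕ) : Prop :=
  ∀ f : V → V, DigContinuous G G f → IsMMapOn G f A m → IsMMapOn G f Set.univ n

/-- `A` is a minimal `(m,n)`-limiting set: it is limiting and no proper subset is. -/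
def IsMinimalLimiting {V : Type*} (G : SimpleGraph V) (A : Set V) (m n : ℕ) : Prop :=
  IsLimiting G A m n ∧ ∀ B : Set V, B ⊂ A → ¬ IsLimiting G B m n

/-- The normal (strong) product adjacency `NP_v(κ_1, …, κ_v)` on a product of digital
images: distinct points are adjacent iff in each coordinate they are equal or adjacent
(whence they are adjacent in at least one coordinate). -/
def NPgraph {ι : Type*} (X : ι → Type*) (G : ∀ i, SimpleGraph (X i)) :
    SimpleGraph (∀ i, X i) where
  Adj x y := x ≠ y ∧ ∀ i, x i = y i ∨ (G i).Adj (x i) (y i)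
  symm := by
    constructor
    rintro x y ⟨hne, h⟩
    exact ⟨hne.symm, fun i => (h i).imp Eq.symm (fun hadj => (G i).adj_symm hadj)⟩
  loopless := by
    constructor
    rintro x ⟨hne, -⟩
    exact hne rfl


/-- Lift a walk in the `i`-th factor to a walk in the normal product that fixes all
other coordinates, with the same length. -/
lemma NPgraph.liftWalk {ι : Type*} [DecidableEq ι] (X : ι → Type*) (G : ∀ i, SimpleGraph (X i))
    {i : ι} {a b : X i} (w : (G i).Walk a b) :
    ∀ x : ∀ j, X j, x i = a →
      ∃ p : (NPgraph X G).Walk x (Function.update x i b), p.length = w.length := by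
  induction w with
  | nil =>
    intro x hx
    subst hx
    exact ⟨SimpleGraph.Walk.nil.copy rfl (Function.update_eq_self i x).symm, by simp⟩
  | @cons a c b h p ih =>
    intro x hx
    have hadj : (G i).Adj (x i) c := hx ▸ h
    have hstep : (NPgraph X G).Adj x (Function.update x i c) := by
      refine ⟨fun heq => hadj.ne ?_, fun j => ?_⟩
      · have := congrFun heq i
        simpa using this
      · by_cases hj : j = i
        · subst hj; right; simpa using hadj
        · left; simp [Function.update_of_ne hj]
    obtain ⟨q, hq⟩ := ih (Function.update x i c) (Function.update_self i c x)
    have hidem : Function.update (Function.update x i c) i b = Function.update x i b := by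
      simp
    refine ⟨SimpleGraph.Walk.cons hstep (q.copy rfl hidem), ?_⟩
    simp [hq]

/-- Project a walk in the normal product to a walk in the `i`-th factor of no greater
length. -/
lemma NPgraph.projWalk {ι : Type*} (X : ι → Type*) (G : ∀ i, SimpleGraph (X i))
    {x y : ∀ j, X j} (p : (NPgraph X G).Walk x y) (i : ι) :
    ∃ q : (G i).Walk (x i) (y i), q.length ≤ p.length := by
  induction p with
  | nil => exact ⟨SimpleGraph.Walk.nil, le_refl _⟩
  | @cons u w z h p ih =>
    obtain ⟨q, hq⟩ := ih
    rcases h.2 i with he | ha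
    · exact ⟨q.copy he.symm rfl, by simpa using Nat.le_succ_of_le hq⟩
    · exact ⟨SimpleGraph.Walk.cons ha q, by simpa using hq⟩

theorem stmt16 {v : ℕ} (X : Fin v → Type*) (G : ∀ i, SimpleGraph (X i))
    (hconn : ∀ i, (G i).Connected)
    (A : Set (∀ i, X i)) (hA : A.Nonempty) (m n : ℕ)
    (hlim : IsLimiting (NPgraph X G) A m n) :
    ∀ i : Fin v, IsLimiting (G i) ((fun x => x i) '' A) m n := by
  intro i g hg hgm
  -- Extend `g` to a self-map of the product acting only on coordinate `i`.
  set F : (∀ j, X j) → (∀ j, X j) := fun x => Function.update x i (g (x i)) with hF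
  -- F is continuous
  have hFcont : DigContinuous (NPgraph X G) (NPgraph X G) F := by
    intro x y hxy
    by_cases hne : F x = F y
    · exact Or.inl hne
    · refine Or.inr ⟨hne, fun j => ?_⟩
      by_cases hj : j = i
      · subst hj
        simp only [hF, Function.update_self]
        rcases hxy.2 j with he | ha
        · left; rw [he]
        · exact hg _ _ ha
      · simp only [hF, Function.update_of_ne hj]
        exact hxy.2 j
  -- key distance bound: NP.dist x (F x) ≤ (G i).dist (x i) (g (x i))
  have key₁ : ∀ x : ∀ j, X j, (NPgraph X G).dist x (F x) ≤ (G i).dist (x i) (g (x i)) := by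
    intro x
    obtain ⟨w, hw⟩ := ((hconn i).preconnected (x i) (g (x i))).exists_walk_length_eq_dist
    obtain ⟨p, hp⟩ := NPgraph.liftWalk X G w x rfl
    calc (NPgraph X G).dist x (F x) ≤ p.length := SimpleGraph.dist_le p
      _ = (G i).dist (x i) (g (x i)) := by rw [hp, hw]
  -- reverse bound: (G i).dist (x i) (g (x i)) ≤ NP.dist x (F x)
  have key₂ : ∀ x : ∀ j, X j, (G i).dist (x i) (g (x i)) ≤ (NPgraph X G).dist x (F x) := by
    intro x
    obtain ⟨w, hw⟩ := ((hconn i).preconnected (x i) (g (x i))).exists_walk_length_eq_dist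
    obtain ⟨p, hp⟩ := NPgraph.liftWalk X G w x rfl
    have hr : (NPgraph X G).Reachable x (F x) := ⟨p⟩
    obtain ⟨p', hp'⟩ := hr.exists_walk_length_eq_dist
    obtain ⟨q, hq⟩ := NPgraph.projWalk X G p' i
    have hq' : q.length ≤ (NPgraph X G).dist x (F x) := hp' ▸ hq
    have : (G i).dist (x i) ((F x) i) ≤ q.length := SimpleGraph.dist_le q
    have hFxi : (F x) i = g (x i) := by simp [hF]
    exact le_trans (by simpa only [hFxi] using this) hq'
  -- F restricted to A is an m-map
  have hFm : IsMMapOn (NPgraph X G) F A m := by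
    intro a ha
    exact (key₁ a).trans (hgm (a i) ⟨a, ha, rfl⟩)
  have hFn := hlim F hFcont hFm
  -- conclude: g is an n-map
  intro b _
  have hne : ∀ j, Nonempty (X j) := fun j => (hconn j).nonempty
  set x : ∀ j, X j := Function.update (fun j => (hne j).some) i b with hx
  have hxi : x i = b := Function.update_self i b _
  have := (key₂ x).trans (hFn x (Set.mem_univ x))
  simpa only [hxi] using this
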